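/- arXiv:2206.03983 — 5 statements merged into one kernel-verified Lean document; each statement's English description precedes it below -/
import Mathlib

section
/- Let k ≥ 1 and let G be a k-regular simple graph on n vertices with n < 2k + 2. Then G is k-edge-connected; that is, for every nonempty proper subset A of the vertex set, the number of edges between A and its complement is at least k. -/
/-- The number of edges between `A` and its complement: each crossing edge is counted
by its unique ordered pair whose first coordinate lies in `A`. -/
def edgeBoundary {V : Type*} [Fintype V] [DecidableEq V] (G : SimpleGraph V)
    [DecidableRel G.Adj] (A : Finset V) : ℕ :=
  ((A ×ˢ Aᶜ).filter fun p => G.Adj p.1 p.2).card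

lemma edgeBoundary_as_sum {V : Type*} [Fintype V] [DecidableEq V] (G : SimpleGraph V)
    [DecidableRel G.Adj] (A : Finset V) :
    edgeBoundary G A = ∑ a ∈ A, (Aᶜ.filter (G.Adj a)).card := by
  unfold edgeBoundary
  rw [Finset.card_filter, Finset.sum_product]
  simp only [Finset.card_filter]

lemma edgeBoundary_compl {V : Type*} [Fintype V] [DecidableEq V] (G : SimpleGraph V)
    [DecidableRel G.Adj] (A : Finset V) :
    edgeBoundary G A = edgeBoundary G Aᶜ := by
  unfold edgeBoundary
  apply Finset.card_bij (fun p _ => p.swap)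
  · rintro ⟨a, b⟩ hp
    simp only [Finset.mem_filter, Finset.mem_product, compl_compl] at *
    exact ⟨⟨hp.1.2, hp.1.1⟩, hp.2.symm⟩
  · rintro ⟨a, b⟩ _ ⟨c, d⟩ _ h
    have := Prod.ext_iff.mp h
    exact Prod.ext this.2 this.1
  · rintro ⟨a, b⟩ hp
    simp only [Finset.mem_filter, Finset.mem_product, compl_compl] at hp
    exact ⟨(b, a), by simp [Finset.mem_filter, Finset.mem_product, hp.1.1, hp.1.2, hp.2.symm]⟩

lemma edgeBoundary_ge {V : Type*} [Fintype V] [DecidableEq V] (G : SimpleGraph V)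
    [DecidableRel G.Adj] {k : ℕ} (hreg : G.IsRegularOfDegree k) (A : Finset V)
    (h1 : 1 ≤ A.card) (h2 : A.card ≤ k) : k ≤ edgeBoundary G A := by
  rw [edgeBoundary_as_sum]
  have key : ∀ a ∈ A, k + 1 - A.card ≤ (Aᶜ.filter (G.Adj a)).card := by
    intro a ha
    have hsplit : (A.filter (G.Adj a)).card + (Aᶜ.filter (G.Adj a)).card = k := by
      rw [← Finset.card_union_of_disjoint]
      · rw [← Finset.filter_union, Finset.union_compl]
        have := hreg a
        rwa [SimpleGraph.degree, SimpleGraph.neighborFinset_eq_filter] at this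
      · exact Finset.disjoint_filter_filter (disjoint_compl_right)
    have hsub : (A.filter (G.Adj a)).card ≤ A.card - 1 := by
      have : A.filter (G.Adj a) ⊆ A.erase a := by
        intro b hb
        rw [Finset.mem_filter] at hb
        refine Finset.mem_erase.mpr ⟨?_, hb.1⟩
        rintro rfl; exact G.irrefl hb.2
      calc (A.filter (G.Adj a)).card ≤ (A.erase a).card := Finset.card_le_card this
        _ = A.card - 1 := Finset.card_erase_of_mem ha
    omega
  have hsum : A.card * (k + 1 - A.card) ≤ ∑ a ∈ A, (Aᶜ.filter (G.Adj a)).card := by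
    calc A.card * (k + 1 - A.card) = ∑ _a ∈ A, (k + 1 - A.card) := by
          rw [Finset.sum_const, smul_eq_mul]
      _ ≤ _ := Finset.sum_le_sum key
  refine le_trans ?_ hsum
  set a := A.card
  have hc : 1 ≤ k + 1 - a := by omega
  have hac : a + (k + 1 - a) = k + 1 := by omega
  nlinarith [Nat.one_le_iff_ne_zero.mp h1]

theorem stmt_0 {V : Type*} [Fintype V] [DecidableEq V] (G : SimpleGraph V)
    [DecidableRel G.Adj] (k : ℕ) (hk : 1 ≤ k) (hreg : G.IsRegularOfDegree k)
    (hn : Fintype.card V < 2 * k + 2) :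
    ∀ A : Finset V, A.Nonempty → A ≠ Finset.univ → k ≤ edgeBoundary G A := by
  intro A hne hAne
  have hApos : 1 ≤ A.card := Finset.card_pos.mpr hne
  have hAc : 1 ≤ Aᶜ.card := by
    rw [Finset.card_compl]
    have : A.card < Fintype.card V := by
      have := Finset.card_le_card (Finset.subset_univ A)
      rw [Finset.card_univ] at this
      rcases lt_or_eq_of_le this with h | h
      · exact h
      · exact absurd (Finset.eq_univ_of_card A (by rw [h])) hAne
    omega
  by_cases hle : A.card ≤ k
  · exact edgeBoundary_ge G hreg A hApos hle
  · rw [edgeBoundary_compl]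
    apply edgeBoundary_ge G hreg Aᶜ hAc
    rw [Finset.card_compl]
    omega
end

section
/- Let k ≥ 3 and let G be a connected k-regular simple graph in which every vertex lies in a (unique) clique of size k, with cliques C_1, ..., C_n. Let H be the k-regular multigraph obtained by contracting each clique C_i to a single vertex (keeping all edges between distinct cliques). Then the algebraic connectivity satisfies μ₂(G) ≤ μ₂(H)/k. -/
open Finset Matrix

/-- The algebraic connectivity `μ₂` of a Laplacian matrix `L`, via the variational
(Courant–Fischer) characterization: the infimum of Rayleigh quotients over nonzero
vectors orthogonal to the all-ones vector. -/
noncomputable def mu2 {n : Type*} [Fintype n] (L : Matrix n n ℝ) : ℝ :=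
  sInf { r : ℝ | ∃ x : n → ℝ, x ≠ 0 ∧ (∑ v, x v) = 0 ∧
    r = (x ⬝ᵥ L.mulVec x) / (x ⬝ᵥ x) }

/-- The Laplacian matrix of the multigraph (with no loops) on `V` whose edge
multiset is `E`; multiplicities are counted. -/
noncomputable def multiLap {V : Type*} [Fintype V] [DecidableEq V]
    (E : Multiset (Sym2 V)) : Matrix V V ℝ :=
  fun u v => if u = v then (∑ w, (E.count s(u, w) : ℝ)) else -(E.count s(u, v) : ℝ)

namespace Stmt3Aux

def qf {V : Type*} (x : V → ℝ) : Sym2 V → ℝ :=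
  Sym2.lift ⟨fun a b => (x a - x b)^2, fun a b => by ring⟩

lemma qf_nonneg {V : Type*} (x : V → ℝ) (e : Sym2 V) : 0 ≤ qf x e := by
  induction e using Sym2.inductionOn with
  | hf a b => simpa [qf] using sq_nonneg (x a - x b)

lemma qf_map {V ι : Type*} (f : V → ι) (y : ι → ℝ) (e : Sym2 V) :
    qf y (Sym2.map f e) = qf (y ∘ f) e := by
  induction e using Sym2.inductionOn with
  | hf a b => simp [qf, Sym2.map_pair_eq]

lemma qf_diag {V : Type*} (x : V → ℝ) (e : Sym2 V) (h : e.IsDiag) : qf x e = 0 := by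
  induction e using Sym2.inductionOn with
  | hf a b =>
    rw [Sym2.mk_isDiag_iff] at h
    simp [qf, h]

variable {V : Type*} [Fintype V] [DecidableEq V]

lemma multiLap_zero : multiLap (0 : Multiset (Sym2 V)) = 0 := by
  ext u v; simp [multiLap]

lemma multiLap_cons (e : Sym2 V) (E : Multiset (Sym2 V)) :
    multiLap (e ::ₘ E) = multiLap {e} + multiLap E := by
  ext u v
  simp only [multiLap, Multiset.count_cons, Multiset.count_singleton, Matrix.add_apply]
  split_ifs with h h2 h2
  · push_cast
    rw [← Finset.sum_add_distrib]
    congr 1; ext w; split_ifs <;> ring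
  · push_cast; ring
  · push_cast; ring

lemma quad_single {a b : V} (hab : a ≠ b) (x : V → ℝ) :
    x ⬝ᵥ (multiLap {s(a,b)}).mulVec x = (x a - x b)^2 := by
  have hd : multiLap {s(a,b)} = vecMulVec
      (fun v => (if v = a then (1:ℝ) else 0) - if v = b then 1 else 0)
      (fun v => (if v = a then (1:ℝ) else 0) - if v = b then 1 else 0) := by
    ext u v
    simp only [multiLap, vecMulVec_apply, Multiset.count_singleton, Sym2.eq_iff]
    split_ifs with h <;> subst_eqs <;>
      simp_all [Sym2.eq_iff, hab, hab.symm, Finset.sum_ite_eq']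
  rw [hd]
  have hm : (vecMulVec (fun v => (if v = a then (1:ℝ) else 0) - if v = b then 1 else 0)
      (fun v => (if v = a then (1:ℝ) else 0) - if v = b then 1 else 0)).mulVec x
      = fun u => ((if u = a then (1:ℝ) else 0) - if u = b then 1 else 0) * (x a - x b) := by
    ext u
    simp [mulVec, vecMulVec_apply, dotProduct, mul_assoc, ← Finset.mul_sum, sub_mul,
      Finset.sum_sub_distrib, ite_mul, Finset.sum_ite_eq']
  rw [hm]
  simp only [dotProduct, ← mul_assoc, ← Finset.sum_mul]
  have : ∑ v, x v * ((if v = a then (1:ℝ) else 0) - if v = b then 1 else 0) = x a - x b := by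
    simp [mul_sub, mul_ite, Finset.sum_sub_distrib, Finset.sum_ite_eq']
  rw [this]; ring

lemma quad (x : V → ℝ) : ∀ (E : Multiset (Sym2 V)), (∀ e ∈ E, ¬ e.IsDiag) →
    x ⬝ᵥ (multiLap E).mulVec x = (E.map (qf x)).sum := by
  refine Multiset.induction ?_ ?_
  · simp [multiLap_zero]
  · intro e E ih h
    rw [multiLap_cons, add_mulVec, dotProduct_add,
      ih (fun e' he' => h e' (Multiset.mem_cons_of_mem he'))]
    simp only [Multiset.map_cons, Multiset.sum_cons]
    congr 1
    induction e using Sym2.inductionOn with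
    | hf a b =>
      have hab : a ≠ b := by
        have := h s(a,b) (Multiset.mem_cons_self _ _)
        simpa [Sym2.mk_isDiag_iff] using this
      rw [quad_single hab]
      simp [qf]

lemma lap_eq_multiLap (G : SimpleGraph V) [DecidableRel G.Adj] :
    G.lapMatrix ℝ = multiLap G.edgeFinset.val := by
  ext u v
  have hc : ∀ u w : V, (G.edgeFinset.val.count s(u, w) : ℝ)
      = if G.Adj u w then 1 else 0 := by
    intro u w
    rw [Multiset.count_eq_of_nodup G.edgeFinset.nodup]
    simp [SimpleGraph.mem_edgeFinset]
  by_cases h : u = v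
  · subst h
    simp only [multiLap, if_pos rfl, hc]
    have : (G.degree u : ℝ) = ∑ w, if G.Adj u w then (1:ℝ) else 0 := by
      rw [SimpleGraph.degree, SimpleGraph.neighborFinset_eq_filter, Finset.card_filter]
      push_cast; rfl
    simp [SimpleGraph.lapMatrix, SimpleGraph.degMatrix, SimpleGraph.adjMatrix, this]
  · simp [multiLap, hc, h, SimpleGraph.lapMatrix, SimpleGraph.degMatrix,
      SimpleGraph.adjMatrix, Matrix.diagonal_apply_ne _ h]

lemma sum_filter_map_eq {α : Type*} (P : α → Prop) [DecidablePred P] (q : α → ℝ)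
    (hq : ∀ e, ¬ P e → q e = 0) (S : Multiset α) :
    ((S.filter P).map q).sum = (S.map q).sum := by
  conv_rhs => rw [← Multiset.filter_add_not P S]
  rw [Multiset.map_add, Multiset.sum_add]
  have h0 : ((S.filter fun a => ¬ P a).map q).sum = 0 := by
    apply Multiset.sum_eq_zero
    intro r hr
    obtain ⟨e, he, rfl⟩ := Multiset.mem_map.mp hr
    exact hq e (Multiset.mem_filter.mp he).2
  rw [h0, add_zero]

end Stmt3Aux

open Stmt3Aux in
/-- Contracting the (pairwise disjoint) `k`-cliques of a connected `k`-regular graph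
`G` — given by the fibers of `f : V → ι` — to single vertices yields a multigraph `H`
with `μ₂(G) ≤ μ₂(H)/k`. -/
theorem stmt_3 {V ι : Type*} [Fintype V] [DecidableEq V] [Fintype ι] [DecidableEq ι]
    (k : ℕ) (hk : 3 ≤ k) (G : SimpleGraph V) [DecidableRel G.Adj]
    (hconn : G.Connected) (hreg : G.IsRegularOfDegree k)
    (f : V → ι) (hsurj : Function.Surjective f)
    (hclique : ∀ i : ι, G.IsNClique k (Finset.univ.filter fun v => f v = i))
    (H : Multiset (Sym2 ι))
    (hH : H = (G.edgeFinset.val.map (Sym2.map f)).filter fun e => ¬ e.IsDiag) :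
    mu2 (G.lapMatrix ℝ) ≤ mu2 (multiLap H) / k := by
  have hk0 : (0:ℝ) < k := by positivity
  have hGE : ∀ e ∈ G.edgeFinset.val, ¬ e.IsDiag := fun e he =>
    G.not_isDiag_of_mem_edgeSet (SimpleGraph.mem_edgeFinset.mp he)
  have hHE : ∀ e ∈ H, ¬ e.IsDiag := by
    intro e he; rw [hH] at he; exact (Multiset.mem_filter.mp he).2
  have hfib : ∀ i, (Finset.univ.filter fun v => f v = i).card = k :=
    fun i => (hclique i).card_eq
  -- fiberwise sums
  have hsum : ∀ g : ι → ℝ, (∑ v, g (f v)) = (k:ℝ) * ∑ i, g i := by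
    intro g
    rw [← Finset.sum_fiberwise Finset.univ f (fun v => g (f v)), Finset.mul_sum]
    refine Finset.sum_congr rfl fun i _ => ?_
    rw [Finset.sum_congr rfl (fun v hv => by
      rw [(Finset.mem_filter.mp hv).2]), Finset.sum_const, hfib i]
    simp [mul_comm]
  -- set for G
  set SG := { r : ℝ | ∃ x : V → ℝ, x ≠ 0 ∧ (∑ v, x v) = 0 ∧
    r = (x ⬝ᵥ (G.lapMatrix ℝ).mulVec x) / (x ⬝ᵥ x) } with hSG
  have hbdd : BddBelow SG := by
    refine ⟨0, fun r hr => ?_⟩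
    obtain ⟨x, _, _, rfl⟩ := hr
    apply div_nonneg
    · rw [lap_eq_multiLap, quad x _ hGE]
      exact Multiset.sum_nonneg (by
        intro r hr
        obtain ⟨e, _, rfl⟩ := Multiset.mem_map.mp hr
        exact qf_nonneg x e)
    · exact Finset.sum_nonneg fun v _ => mul_self_nonneg (x v)
  -- two distinct elements in ι
  obtain ⟨v0⟩ := hconn.nonempty
  have hij : ∃ i j : ι, i ≠ j := by
    have hdeg := hreg v0
    by_contra hc
    push_neg at hc
    have hsub : G.neighborFinset v0 ⊆ (Finset.univ.filter fun v => f v = f v0).erase v0 := by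
      intro w hw
      rw [Finset.mem_erase]
      exact ⟨fun h => G.irrefl (h ▸ (SimpleGraph.mem_neighborFinset _ _ _).mp hw),
        Finset.mem_filter.mpr ⟨Finset.mem_univ _, hc _ _⟩⟩
    have hm : v0 ∈ (Finset.univ.filter fun v => f v = f v0) := by simp
    have := Finset.card_le_card hsub
    rw [Finset.card_erase_of_mem hm, hfib,
      SimpleGraph.card_neighborFinset_eq_degree, hdeg] at this
    omega
  obtain ⟨i0, j0, hij0⟩ := hij
  -- nonemptiness of the H-set
  have hne : { r : ℝ | ∃ y : ι → ℝ, y ≠ 0 ∧ (∑ v, y v) = 0 ∧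
      r = (y ⬝ᵥ (multiLap H).mulVec y) / (y ⬝ᵥ y) }.Nonempty := by
    set y0 : ι → ℝ := Pi.single i0 1 - Pi.single j0 1 with hy0
    refine ⟨_, y0, ?_, ?_, rfl⟩
    · intro h
      have : y0 i0 = 0 := by rw [h]; rfl
      simp [hy0, Pi.single_apply, hij0, hij0.symm] at this
    · simp [hy0, Finset.sum_sub_distrib, Pi.single_apply, Finset.sum_ite_eq']
  -- the key estimate
  rw [mu2, mu2, le_div_iff₀ hk0, ← hSG]
  refine le_csInf hne ?_
  rintro r ⟨y, hy0, hysum, rfl⟩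
  set x : V → ℝ := y ∘ f with hx
  have hxne : x ≠ 0 := by
    intro h
    apply hy0
    ext i
    obtain ⟨v, rfl⟩ := hsurj i
    have : x v = 0 := by rw [h]; rfl
    simpa [hx] using this
  have hxsum : (∑ v, x v) = 0 := by
    rw [hx]; show (∑ v, y (f v)) = 0
    rw [hsum y, hysum, mul_zero]
  have hxx : (x ⬝ᵥ x) = (k:ℝ) * (y ⬝ᵥ y) := by
    simpa [dotProduct, hx] using hsum (fun i => y i * y i)
  have hquad : x ⬝ᵥ (G.lapMatrix ℝ).mulVec x = y ⬝ᵥ (multiLap H).mulVec y := by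
    rw [lap_eq_multiLap, quad x _ hGE, quad y H hHE, hH,
      sum_filter_map_eq _ (qf y) (fun e he => qf_diag y e (not_not.mp he)),
      Multiset.map_map]
    exact congrArg Multiset.sum (Multiset.map_congr rfl fun e _ => (qf_map f y e).symm)
  have hmem : (y ⬝ᵥ (multiLap H).mulVec y) / ((k:ℝ) * (y ⬝ᵥ y)) ∈ SG := by
    exact ⟨x, hxne, hxsum, by rw [hquad, hxx]⟩
  have h1 : sInf SG ≤ (y ⬝ᵥ (multiLap H).mulVec y) / ((k:ℝ) * (y ⬝ᵥ y)) :=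
    csInf_le hbdd hmem
  calc sInf SG * k ≤ (y ⬝ᵥ (multiLap H).mulVec y) / ((k:ℝ) * (y ⬝ᵥ y)) * k := by
        exact mul_le_mul_of_nonneg_right h1 (le_of_lt hk0)
    _ = (y ⬝ᵥ (multiLap H).mulVec y) / (y ⬝ᵥ y) := by
        rw [mul_comm (k:ℝ) (y ⬝ᵥ y), ← div_div, div_mul_cancel₀ _ (ne_of_gt hk0)]
end

section
/- A connected (multi)graph G satisfies: G - e contains k edge-disjoint spanning trees for every edge e of G, if and only if η(G) > k. -/
/-- Number of connected components of the multigraph on vertex set `V` with edge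
multiset `E` (isolated vertices count as components). -/
noncomputable def numComponents {V : Type*} [Fintype V] [DecidableEq V]
    (E : Multiset (Sym2 V)) : ℕ :=
  Nat.card (Quot (fun a b : V => s(a, b) ∈ E))

/-- The strength (fractional spanning tree packing number) of the multigraph with
edge multiset `E`. -/
noncomputable def strength {V : Type*} [Fintype V] [DecidableEq V]
    (E : Multiset (Sym2 V)) : ℝ :=
  sInf { r : ℝ | ∃ X ≤ E, 1 < numComponents (E - X) ∧
    r = (Multiset.card X : ℝ) / ((numComponents (E - X) : ℝ) - 1) }

/-- A sub-multiset of edges is a spanning tree if it connects all of `V` and has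
`|V| - 1` edges. -/
def IsSpanningTree {V : Type*} [Fintype V] [DecidableEq V]
    (T : Multiset (Sym2 V)) : Prop :=
  numComponents T = 1 ∧ Multiset.card T = Fintype.card V - 1

/-- The multigraph with edge multiset `E` contains `k` edge-disjoint spanning trees. -/
def HasEdgeDisjointSpanningTrees {V : Type*} [Fintype V] [DecidableEq V]
    (E : Multiset (Sym2 V)) (k : ℕ) : Prop :=
  ∃ Ts : Fin k → Multiset (Sym2 V), (∑ i, Ts i) ≤ E ∧ ∀ i, IsSpanningTree (Ts i)


set_option linter.unusedSectionVars false
set_option maxHeartbeats 1000000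

open Multiset
namespace NWAux
variable {V : Type*} [Fintype V] [DecidableEq V]

/-- edge relation of a multiset of edges -/
def rel (E : Multiset (Sym2 V)) (a b : V) : Prop := s(a, b) ∈ E

/-- connectivity: same component -/
def conn (E : Multiset (Sym2 V)) (a b : V) : Prop := Quot.mk (rel E) a = Quot.mk (rel E) b

/-- number of components -/
noncomputable def nc (E : Multiset (Sym2 V)) : ℕ := Nat.card (Quot (rel E))

lemma conn_refl (E : Multiset (Sym2 V)) (a : V) : conn E a a := rfl
lemma conn_symm {E : Multiset (Sym2 V)} {a b : V} (h : conn E a b) : conn E b a := h.symm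
lemma conn_trans {E : Multiset (Sym2 V)} {a b c : V} (h : conn E a b) (h' : conn E b c) :
    conn E a c := h.trans h'

lemma conn_of_mem {E : Multiset (Sym2 V)} {a b : V} (h : s(a, b) ∈ E) : conn E a b :=
  Quot.sound h

lemma rel_symm' {E : Multiset (Sym2 V)} {a b : V} (h : rel E a b) : rel E b a := by
  unfold rel at *; rwa [Sym2.eq_swap]

instance (E : Multiset (Sym2 V)) : Finite (Quot (rel E)) :=
  Finite.of_surjective (Quot.mk (rel E)) Quot.mk_surjective

/-- surjection lemma -/
lemma card_quot_le {r s : V → V → Prop}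
    (h : ∀ a b, r a b → Quot.mk s a = Quot.mk s b) :
    Nat.card (Quot s) ≤ Nat.card (Quot r) := by
  have : Finite (Quot r) := Finite.of_surjective (Quot.mk r) Quot.mk_surjective
  refine Nat.card_le_card_of_surjective (Quot.lift (Quot.mk s) h) ?_
  intro x
  obtain ⟨v, rfl⟩ := Quot.mk_surjective x
  exact ⟨Quot.mk r v, rfl⟩

lemma conn_mono {A B : Multiset (Sym2 V)} (hAB : A ≤ B) {x y : V} (h : conn A x y) :
    conn B x y := by
  have hs : ∀ a b, rel A a b → Quot.mk (rel B) a = Quot.mk (rel B) b := by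
    intro a b hab; exact Quot.sound (mem_of_le hAB hab)
  have := congrArg (Quot.lift (Quot.mk (rel B)) hs) h
  simp at this
  exact this

lemma nc_le_of_le {A B : Multiset (Sym2 V)} (hAB : A ≤ B) : nc B ≤ nc A :=
  card_quot_le (fun a b hab => Quot.sound (mem_of_le hAB hab))

section consAnalysis

open scoped Classical

private noncomputable def m (A : Multiset (Sym2 V)) (a b : V) :
    Quot (rel A) → Quot (rel A) := fun x =>
  if x = Quot.mk (rel A) b then Quot.mk (rel A) a else x

private lemma h0_sound (A : Multiset (Sym2 V)) (a b : V) : ∀ u v : V, rel (s(a,b) ::ₘ A) u v →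
    m A a b (Quot.mk (rel A) u) = m A a b (Quot.mk (rel A) v) := by
  intro u v huv
  rcases Multiset.mem_cons.1 huv with h | h
  · rcases Sym2.eq_iff.1 h with ⟨rfl, rfl⟩ | ⟨rfl, rfl⟩
    · unfold m
      split <;> split <;> simp_all
    · unfold m
      split <;> split <;> simp_all
  · rw [show Quot.mk (rel A) u = Quot.mk (rel A) v from Quot.sound h]

private noncomputable def hmap (A : Multiset (Sym2 V)) (a b : V) :
    Quot (rel (s(a,b) ::ₘ A)) → Quot (rel A) :=
  Quot.lift (fun v => m A a b (Quot.mk (rel A) v)) (h0_sound A a b)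

private def fmap (A : Multiset (Sym2 V)) (a b : V) :
    Quot (rel A) → Quot (rel (s(a,b) ::ₘ A)) :=
  Quot.lift (Quot.mk (rel (s(a,b) ::ₘ A)))
    (fun u v huv => Quot.sound (Multiset.mem_cons_of_mem huv))

private lemma fh (A : Multiset (Sym2 V)) (a b : V) :
    ∀ x, fmap A a b (hmap A a b x) = x := by
  intro x
  obtain ⟨v, rfl⟩ := Quot.mk_surjective x
  show fmap A a b (m A a b (Quot.mk (rel A) v)) = Quot.mk _ v
  unfold m
  split
  · rename_i hv
    show Quot.mk _ a = Quot.mk _ v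
    have h1 : conn (s(a,b) ::ₘ A) a b := Quot.sound (Multiset.mem_cons_self _ _)
    have h2 : conn (s(a,b) ::ₘ A) b v :=
      conn_mono (Multiset.le_cons_self _ _) (hv.symm : conn A b v)
    exact h1.trans h2
  · rfl

private lemma hf (A : Multiset (Sym2 V)) (a b : V) (v : V) :
    hmap A a b (Quot.mk (rel (s(a,b) ::ₘ A)) v) = m A a b (Quot.mk (rel A) v) := rfl

lemma nc_cons_eq {A : Multiset (Sym2 V)} {a b : V} (h : conn A a b) :
    nc (s(a,b) ::ₘ A) = nc A := by
  have hm : ∀ x, m A a b x = x := by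
    intro x; unfold m; split
    · rename_i hx; rw [hx, ← h]
    · rfl
  have hfh := fh A a b
  have hhf : ∀ x, hmap A a b (fmap A a b x) = x := by
    intro x
    obtain ⟨v, rfl⟩ := Quot.mk_surjective x
    show hmap A a b (Quot.mk _ v) = _
    rw [hf, hm]
  exact Nat.card_eq_of_bijective (hmap A a b)
    ⟨fun x y hxy => by rw [← hfh x, hxy, hfh], fun y => ⟨fmap A a b y, hhf y⟩⟩

lemma nc_cons_add_one {A : Multiset (Sym2 V)} {a b : V} (h : ¬ conn A a b) :
    nc (s(a,b) ::ₘ A) + 1 = nc A := by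
  have hinj : Function.Injective (hmap A a b) := by
    intro x y hxy
    rw [← fh A a b x, hxy, fh A a b]
  have hrange : Set.range (hmap A a b) = {Quot.mk (rel A) b}ᶜ := by
    ext x
    simp only [Set.mem_range, Set.mem_compl_iff, Set.mem_singleton_iff]
    constructor
    · rintro ⟨y, rfl⟩
      obtain ⟨v, rfl⟩ := Quot.mk_surjective y
      rw [hf]
      unfold m
      split
      · intro hc; exact h hc
      · rename_i hv; exact hv
    · intro hx
      obtain ⟨v, hv⟩ := Quot.mk_surjective x
      refine ⟨Quot.mk _ v, ?_⟩
      rw [hf]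
      unfold m
      subst hv
      split
      · rename_i hv'; exact absurd hv' hx
      · rfl
  have h1 : Nat.card (Quot (rel (s(a,b) ::ₘ A))) = Nat.card (Set.range (hmap A a b)) :=
    (Nat.card_range_of_injective hinj).symm
  show Nat.card (Quot (rel (s(a,b) ::ₘ A))) + 1 = Nat.card (Quot (rel A))
  rw [h1, hrange]
  have hfin : Finite (Quot (rel A)) := inferInstance
  have h2 := Set.ncard_add_ncard_compl ({Quot.mk (rel A) b} : Set (Quot (rel A)))
    (Set.toFinite _) (Set.toFinite _)
  rw [Set.ncard_singleton] at h2
  rw [Nat.card_coe_set_eq]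
  omega

/-- trichotomy -/
lemma conn_cons_iff {A : Multiset (Sym2 V)} {a b x y : V} :
    conn (s(a,b) ::ₘ A) x y ↔
      conn A x y ∨ (conn A x a ∧ conn A b y) ∨ (conn A x b ∧ conn A a y) := by
  constructor
  · intro hxy
    have := congrArg (hmap A a b) hxy
    rw [hf, hf] at this
    unfold m at this
    split at this <;> split at this <;> rename_i h1 h2
    · exact Or.inl (h1.trans h2.symm)
    · right; right
      exact ⟨h1, this⟩
    · right; left
      exact ⟨this, h2.symm⟩
    · exact Or.inl this
  · intro hor
    have hab : conn (s(a,b) ::ₘ A) a b := Quot.sound (Multiset.mem_cons_self _ _)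
    have hle := Multiset.le_cons_self A (s(a,b))
    rcases hor with h | ⟨h1, h2⟩ | ⟨h1, h2⟩
    · exact conn_mono hle h
    · exact (conn_mono hle h1).trans (hab.trans (conn_mono hle h2))
    · exact (conn_mono hle h1).trans (hab.symm.trans (conn_mono hle h2))

end consAnalysis



lemma nc_zero : nc (0 : Multiset (Sym2 V)) = Fintype.card V := by
  have : Quot (rel (0 : Multiset (Sym2 V))) ≃ V := by
    refine ⟨Quot.lift id (fun a b hab => absurd hab (Multiset.notMem_zero _)),
      Quot.mk _, ?_, ?_⟩
    · intro x; obtain ⟨v, rfl⟩ := Quot.mk_surjective x; rfl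
    · intro v; rfl
  rw [nc, Nat.card_congr this, Nat.card_eq_fintype_card]

lemma nc_le_cardV (A : Multiset (Sym2 V)) : nc A ≤ Fintype.card V := by
  rw [← Nat.card_eq_fintype_card]
  exact Nat.card_le_card_of_surjective (Quot.mk (rel A)) Quot.mk_surjective

lemma nc_pos [Nonempty V] (A : Multiset (Sym2 V)) : 1 ≤ nc A := by
  have : Nonempty (Quot (rel A)) := ⟨Quot.mk _ (Classical.arbitrary V)⟩
  exact Nat.card_pos

lemma nc_cons_le (e : Sym2 V) (A : Multiset (Sym2 V)) : nc (e ::ₘ A) ≤ nc A :=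
  nc_le_of_le (Multiset.le_cons_self _ _)

lemma nc_le_cons_add_one (e : Sym2 V) (A : Multiset (Sym2 V)) :
    nc A ≤ nc (e ::ₘ A) + 1 := by
  induction e using Sym2.ind with
  | _ a b =>
    by_cases h : conn A a b
    · rw [nc_cons_eq h]; omega
    · rw [← nc_cons_add_one h]

lemma nc_le_erase_add_one (g : Sym2 V) (A : Multiset (Sym2 V)) :
    nc (A.erase g) ≤ nc A + 1 := by
  by_cases h : g ∈ A
  · conv_rhs => rw [← Multiset.cons_erase h]
    exact nc_le_cons_add_one g (A.erase g)
  · rw [Multiset.erase_of_notMem h]; omega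

lemma nc_sub_le (A X : Multiset (Sym2 V)) : nc (A - X) ≤ nc A + Multiset.card X := by
  induction X using Multiset.induction generalizing A with
  | empty => simp
  | cons g X ih =>
    have h1 : A - (g ::ₘ X) = (A.erase g) - X := by
      rw [Multiset.sub_cons]
    rw [h1]
    calc nc ((A.erase g) - X) ≤ nc (A.erase g) + Multiset.card X := ih _
    _ ≤ nc A + 1 + Multiset.card X := by
        have := nc_le_erase_add_one g A; omega
    _ = nc A + Multiset.card (g ::ₘ X) := by rw [Multiset.card_cons]; ring

lemma cardV_le_card_add_nc (A : Multiset (Sym2 V)) :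
    Fintype.card V ≤ Multiset.card A + nc A := by
  induction A using Multiset.induction with
  | empty => simp [nc_zero]
  | cons e A ih =>
    have := nc_le_cons_add_one e A
    rw [Multiset.card_cons]
    omega

/-- spanning forest extraction -/
lemma exists_forest (A : Multiset (Sym2 V)) :
    ∃ T ≤ A, nc T = nc A ∧ Multiset.card T + nc T = Fintype.card V := by
  induction A using Multiset.induction with
  | empty => exact ⟨0, le_refl _, rfl, by simp [nc_zero]⟩
  | cons e A ih =>
    obtain ⟨T, hTA, hnc, hcard⟩ := ih
    induction e using Sym2.ind with
    | _ a b =>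
      by_cases h : conn A a b
      · exact ⟨T, le_trans hTA (Multiset.le_cons_self _ _), by rw [nc_cons_eq h, hnc], hcard⟩
      · have hT : ¬ conn T a b := fun hc => h (conn_mono hTA hc)
        refine ⟨s(a,b) ::ₘ T, Multiset.cons_le_cons _ hTA, ?_, ?_⟩
        · have h1 := nc_cons_add_one hT
          have h2 := nc_cons_add_one h
          omega
        · have h1 := nc_cons_add_one hT
          rw [Multiset.card_cons]
          omega

/-- minimal connecting submultiset -/
lemma exists_minimal_conn {A : Multiset (Sym2 V)} {x y : V} (h : conn A x y) :
    ∃ B ≤ A, conn B x y ∧ ∀ f ∈ B, ¬ conn (B.erase f) x y := by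
  classical
  suffices H : ∀ n (A : Multiset (Sym2 V)), Multiset.card A = n → conn A x y →
      ∃ B ≤ A, conn B x y ∧ ∀ f ∈ B, ¬ conn (B.erase f) x y by
    exact H _ A rfl h
  intro n
  induction n using Nat.strong_induction_on with
  | _ n ih =>
    intro A hn hA
    by_cases hex : ∃ f ∈ A, conn (A.erase f) x y
    · obtain ⟨f, hf, hc⟩ := hex
      have hpos : 0 < Multiset.card A := Multiset.card_pos_iff_exists_mem.2 ⟨f, hf⟩
      have hcard : Multiset.card (A.erase f) < n := by
        have := Multiset.card_erase_lt_of_mem hf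
        omega
      obtain ⟨B, hBA, h1, h2⟩ := ih _ hcard _ rfl hc
      exact ⟨B, le_trans hBA (Multiset.erase_le _ _), h1, h2⟩
    · push_neg at hex
      exact ⟨A, le_refl _, hA, hex⟩

lemma cons_le_of_mem_sub {E S : Multiset (Sym2 V)} {g : Sym2 V} (hS : S ≤ E)
    (hg : g ∈ E - S) : g ::ₘ S ≤ E := by
  rw [Multiset.le_iff_count]
  intro a
  rw [Multiset.count_cons]
  have h1 : Multiset.count a S ≤ Multiset.count a E := Multiset.count_le_of_le a hS
  by_cases hag : a = g
  · subst hag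
    have := Multiset.count_pos.2 hg
    rw [Multiset.count_sub] at this
    simp only [if_pos rfl, if_true]
    omega
  · simp [hag, h1]

/-- an edge lies inside a vertex set -/
def inSet (W : Set V) (e : Sym2 V) : Prop := ∀ v ∈ e, v ∈ W

/-- filter with a pinned classical decidability instance -/
noncomputable def fil (p : Sym2 V → Prop) (A : Multiset (Sym2 V)) : Multiset (Sym2 V) :=
  @Multiset.filter _ p (Classical.decPred p) A

lemma fil_eq_filter (p : Sym2 V → Prop) [inst : DecidablePred p] (A : Multiset (Sym2 V)) :
    fil p A = A.filter p :=
  @Multiset.filter_congr _ p p (Classical.decPred p) inst A (fun _ _ => Iff.rfl)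

lemma fil_le (p : Sym2 V → Prop) (A : Multiset (Sym2 V)) : fil p A ≤ A :=
  @Multiset.filter_le _ p (Classical.decPred p) A

lemma fil_mono (p : Sym2 V → Prop) {A B : Multiset (Sym2 V)} (h : A ≤ B) :
    fil p A ≤ fil p B :=
  @Multiset.filter_le_filter _ p (Classical.decPred p) _ _ h

lemma le_fil {B A : Multiset (Sym2 V)} {p : Sym2 V → Prop} :
    B ≤ fil p A ↔ B ≤ A ∧ ∀ e ∈ B, p e :=
  @Multiset.le_filter _ p (Classical.decPred p) B A

lemma fil_le_fil_of_imp {A : Multiset (Sym2 V)} {p q : Sym2 V → Prop}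
    (h : ∀ e ∈ A, p e → q e) : fil p A ≤ fil q A := by
  rw [le_fil]
  refine ⟨le_trans (fil_le p A) (le_refl A), fun e he => ?_⟩
  have h1 : e ∈ A := Multiset.mem_of_le (fil_le p A) he
  have h2 : p e := @Multiset.of_mem_filter _ p (Classical.decPred p) _ _ he
  exact h e h1 (h2)

lemma mem_fil {A : Multiset (Sym2 V)} {p : Sym2 V → Prop} {e : Sym2 V} :
    e ∈ fil p A ↔ e ∈ A ∧ p e :=
  @Multiset.mem_filter _ p (Classical.decPred p) e A

lemma fil_cons_pos {p : Sym2 V → Prop} {g : Sym2 V} (A : Multiset (Sym2 V)) (h : p g) :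
    fil p (g ::ₘ A) = g ::ₘ fil p A :=
  @Multiset.filter_cons_of_pos _ p (Classical.decPred p) _ A h

lemma fil_cons_neg {p : Sym2 V → Prop} {g : Sym2 V} (A : Multiset (Sym2 V)) (h : ¬ p g) :
    fil p (g ::ₘ A) = fil p A :=
  @Multiset.filter_cons_of_neg _ p (Classical.decPred p) _ A h

lemma fil_add (p : Sym2 V → Prop) (A B : Multiset (Sym2 V)) :
    fil p (A + B) = fil p A + fil p B :=
  @Multiset.filter_add _ p (Classical.decPred p) A B

lemma count_fil (p : Sym2 V → Prop) (a : Sym2 V) (A : Multiset (Sym2 V)) :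
    Multiset.count a (fil p A)
      = @ite _ (p a) (Classical.decPred p a) (Multiset.count a A) 0 :=
  @Multiset.count_filter _ _ p (Classical.decPred p) a A

lemma fil_add_not (p : Sym2 V → Prop) (A : Multiset (Sym2 V)) :
    fil p A + fil (fun e => ¬ p e) A = A := by
  refine Multiset.ext.2 (fun a => ?_)
  rw [Multiset.count_add, count_fil, count_fil]
  by_cases h : p a
  · rw [if_pos h, if_neg (not_not_intro h), add_zero]
  · rw [if_neg h, if_pos h, zero_add]

lemma fil_eq_nil {p : Sym2 V → Prop} {A : Multiset (Sym2 V)} :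
    fil p A = 0 ↔ ∀ e ∈ A, ¬ p e :=
  @Multiset.filter_eq_nil _ p (Classical.decPred p) A

lemma fil_sum_eq {ι : Type*} (p : Sym2 V → Prop) (s : Finset ι)
    (f : ι → Multiset (Sym2 V)) :
    fil p (∑ i ∈ s, f i) = ∑ i ∈ s, fil p (f i) := by
  classical
  induction s using Finset.induction with
  | empty => simp [fil]
  | insert _ _ h ih => rw [Finset.sum_insert h, Finset.sum_insert h, fil_add, ih]

/-- total component count -/
noncomputable def psi {k : ℕ} (F : Fin k → Multiset (Sym2 V)) : ℕ := ∑ i, nc (F i)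

section Exchange

open scoped Classical

variable (k : ℕ) (E : Multiset (Sym2 V))

/-- admissible tuples -/
def Adm (F : Fin k → Multiset (Sym2 V)) : Prop := (∑ i, F i) ≤ E

/-- minimal total component count -/
noncomputable def mu : ℕ := sInf {m | ∃ F, Adm k E F ∧ psi F = m}

lemma mu_spec : ∃ F, Adm k E F ∧ psi F = mu k E := by
  have hne : {m | ∃ F, Adm k E F ∧ psi F = m}.Nonempty :=
    ⟨psi (fun _ => (0 : Multiset (Sym2 V))), fun _ => 0, by simp [Adm], rfl⟩
  exact Nat.sInf_mem hne

lemma mu_min {F : Fin k → Multiset (Sym2 V)} (h : Adm k E F) : mu k E ≤ psi F :=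
  Nat.sInf_le ⟨F, h, rfl⟩

lemma sum_update_add (F : Fin k → Multiset (Sym2 V)) (j : Fin k) (M : Multiset (Sym2 V)) :
    (∑ i, Function.update F j M i) + F j = M + ∑ i, F i := by
  rw [Finset.sum_update_of_mem (Finset.mem_univ j),
    Finset.sum_eq_add_sum_sdiff_singleton_of_mem (Finset.mem_univ j) F]
  abel

lemma psi_update_add (F : Fin k → Multiset (Sym2 V)) (j : Fin k) (M : Multiset (Sym2 V)) :
    psi (Function.update F j M) + nc (F j) = nc M + psi F := by
  unfold psi
  have h1 : ∑ i, nc (Function.update F j M i) =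
      nc M + ∑ i ∈ Finset.univ \ {j}, nc (F i) := by
    rw [← Finset.sum_update_of_mem (Finset.mem_univ j) (fun i => nc (F i)) (nc M)]
    apply Finset.sum_congr rfl
    intro i _
    by_cases hij : i = j
    · subst hij; simp
    · simp [Function.update_of_ne hij]
  rw [h1, Finset.sum_eq_add_sum_sdiff_singleton_of_mem (Finset.mem_univ j) (fun i => nc (F i))]
  omega

lemma single_le_sum' (F : Fin k → Multiset (Sym2 V)) (j : Fin k) : F j ≤ ∑ i, F i := by
  rw [Finset.sum_eq_add_sum_sdiff_singleton_of_mem (Finset.mem_univ j) F]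
  exact le_add_right (le_refl _)

/-- every leftover edge of a `psi`-minimal tuple has its ends connected in every part -/
lemma leftover_conn {F : Fin k → Multiset (Sym2 V)} (hA : Adm k E F)
    (hpsi : psi F = mu k E) {x y : V} (hg : s(x,y) ∈ E - ∑ i, F i) (j : Fin k) :
    conn (F j) x y := by
  by_contra hcon
  set F' := Function.update F j (s(x,y) ::ₘ F j) with hF'
  have hsum : (∑ i, F' i) + F j = (s(x,y) ::ₘ F j) + ∑ i, F i := sum_update_add k F j _
  have hsum2 : (s(x,y) ::ₘ F j) + ∑ i, F i = (s(x,y) ::ₘ ∑ i, F i) + F j := by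
    rw [Multiset.cons_add, Multiset.cons_add]; abel
  have hsum3 : (∑ i, F' i) = s(x,y) ::ₘ ∑ i, F i := by
    apply add_right_cancel (b := F j)
    rw [hsum, hsum2]
  have hadm' : Adm k E F' := by
    unfold Adm
    rw [hsum3]
    exact cons_le_of_mem_sub hA hg
  have hpsi' : psi F' + nc (F j) = nc (s(x,y) ::ₘ F j) + psi F := psi_update_add k F j _
  have hlt : nc (s(x,y) ::ₘ F j) + 1 = nc (F j) := nc_cons_add_one hcon
  have : mu k E ≤ psi F' := mu_min k E hadm'
  omega

/-- a legal exchange move -/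
def Move (F F' : Fin k → Multiset (Sym2 V)) : Prop :=
  ∃ (j : Fin k) (g f : Sym2 V), g ∈ E - ∑ i, F i ∧ f ∈ g ::ₘ F j ∧
    nc ((g ::ₘ F j).erase f) = nc (F j) ∧ F' = Function.update F j ((g ::ₘ F j).erase f)

lemma Move.preserve {F F' : Fin k → Multiset (Sym2 V)} (hA : Adm k E F)
    (hM : Move k E F F') : Adm k E F' ∧ psi F' = psi F := by
  obtain ⟨j, g, f, hg, hf, hnc, rfl⟩ := hM
  constructor
  · unfold Adm
    have hsum : (∑ i, Function.update F j ((g ::ₘ F j).erase f) i) + F j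
        = (g ::ₘ F j).erase f + ∑ i, F i := sum_update_add k F j _
    have h1 : (g ::ₘ F j).erase f + ∑ i, F i ≤ (g ::ₘ F j) + ∑ i, F i :=
      add_le_add_left (Multiset.erase_le f _) _
    have h2 : (g ::ₘ F j) + ∑ i, F i = (g ::ₘ ∑ i, F i) + F j := by
      rw [Multiset.cons_add, Multiset.cons_add]; abel
    have h3 : (∑ i, Function.update F j ((g ::ₘ F j).erase f) i) + F j
        ≤ (g ::ₘ ∑ i, F i) + F j := by rw [hsum, ← h2]; exact h1
    have h4 := le_of_add_le_add_right h3
    exact le_trans h4 (cons_le_of_mem_sub hA hg)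
  · have := psi_update_add k F j ((g ::ₘ F j).erase f)
    omega

variable (F0 : Fin k → Multiset (Sym2 V))

/-- tuples reachable in `n` moves -/
inductive ReachN : ℕ → (Fin k → Multiset (Sym2 V)) → Prop
  | zero : ReachN 0 F0
  | succ {n F F'} : ReachN n F → Move k E F F' → ReachN (n+1) F'

lemma reach_preserve (hA : Adm k E F0) {n F} (h : ReachN k E F0 n F) :
    Adm k E F ∧ psi F = psi F0 := by
  induction h with
  | zero => exact ⟨hA, rfl⟩
  | succ hR hM ih =>
    obtain ⟨h1, h2⟩ := ih
    obtain ⟨h3, h4⟩ := (Move.preserve k E h1 hM)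
    exact ⟨h3, h4.trans h2⟩

/-- edges that become leftover after some sequence of moves -/
def DSet : Set (Sym2 V) := {g | ∃ n F, ReachN k E F0 n F ∧ g ∈ E - ∑ i, F i}

variable (x0 : V)

/-- the `DSet`-component of `x0` -/
def USet : Set V := {w | Relation.EqvGen (fun a b => s(a, b) ∈ DSet k E F0) x0 w}

/-- an edge lies inside `USet` -/
def inU : Sym2 V → Prop := inSet (USet k E F0 x0)

lemma inU_def {e : Sym2 V} : inU k E F0 x0 e ↔ ∀ v ∈ e, v ∈ USet k E F0 x0 := Iff.rfl

lemma x0_mem_U : x0 ∈ USet k E F0 x0 := Relation.EqvGen.refl x0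

lemma mem_U_of_rel {w z : V} (hw : w ∈ USet k E F0 x0) (hD : s(w, z) ∈ DSet k E F0) :
    z ∈ USet k E F0 x0 :=
  Relation.EqvGen.trans _ _ _ hw (Relation.EqvGen.rel _ _ hD)

lemma U_closed_conn {A : Multiset (Sym2 V)} (hD : ∀ e ∈ A, e ∈ DSet k E F0)
    {x w : V} (hx : x ∈ USet k E F0 x0) (hc : conn A x w) : w ∈ USet k E F0 x0 := by
  have key : ∀ a b : V, Relation.EqvGen (rel A) a b →
      (a ∈ USet k E F0 x0 ↔ b ∈ USet k E F0 x0) := by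
    intro a b hab
    induction hab with
    | rel a b h =>
      constructor
      · intro ha; exact mem_U_of_rel k E F0 x0 ha (hD _ h)
      · intro hb
        have h' : s(b, a) ∈ A := by rwa [Sym2.eq_swap]
        exact mem_U_of_rel k E F0 x0 hb (hD _ h')
    | refl a => exact Iff.rfl
    | symm a b _ ih => exact ih.symm
    | trans a b c _ _ ih1 ih2 => exact ih1.trans ih2
  exact (key x w (Quot.eqvGen_exact hc)).1 hx

/-- connectivity using only edges inside `USet` -/
def connU (A : Multiset (Sym2 V)) (x y : V) : Prop :=
  conn (fil (inU k E F0 x0) A) x y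

/-- the key step: a leftover edge of a reachable tuple, with an end in `U`,
has its ends `connU`-connected in every part of `F0` -/
lemma edge_step (hA : Adm k E F0) (hpsi : psi F0 = mu k E)
    {N : ℕ} {F : Fin k → Multiset (Sym2 V)} (hR : ReachN k E F0 N F)
    (hchain : ∀ (i : Fin k) (x y : V), connU k E F0 x0 (F i) x y → connU k E F0 x0 (F0 i) x y)
    {x y : V} (hxy : s(x,y) ∈ E - ∑ i, F i) (hxU : x ∈ USet k E F0 x0) (i : Fin k) :
    connU k E F0 x0 (F0 i) x y := by
  obtain ⟨hAF, hpsiF⟩ := reach_preserve k E F0 hA hR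
  have hconn : conn (F i) x y := leftover_conn k E hAF (hpsiF.trans hpsi) hxy i
  obtain ⟨B, hBF, hBconn, hBmin⟩ := exists_minimal_conn hconn
  -- every edge of B is in DSet
  have hBD : ∀ f ∈ B, f ∈ DSet k E F0 := by
    intro f hfB
    have hfF : f ∈ F i := Multiset.mem_of_le hBF hfB
    have hnc : nc ((s(x,y) ::ₘ F i).erase f) = nc (F i) := by
      by_cases hfg : f = s(x,y)
      · subst hfg
        rw [Multiset.erase_cons_head]
      · rw [Multiset.erase_cons_tail _ (fun h => hfg h.symm)]
        obtain ⟨p, q, hpq⟩ : ∃ p q, f = s(p,q) := by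
          obtain ⟨⟨p,q⟩, rfl⟩ := Quot.exists_rep f; exact ⟨p, q, rfl⟩
        subst hpq
        have hBe : conn (s(x,y) ::ₘ (B.erase (s(p,q)))) p q := by
          have hcons : conn (s(p,q) ::ₘ (B.erase (s(p,q)))) x y := by
            rwa [Multiset.cons_erase hfB]
          rcases conn_cons_iff.1 hcons with h | ⟨h1, h2⟩ | ⟨h1, h2⟩
          · exact absurd h (hBmin _ hfB)
          · have hle := Multiset.le_cons_self (B.erase (s(p,q))) (s(x,y))
            have hxy' : conn (s(x,y) ::ₘ (B.erase (s(p,q)))) x y :=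
              conn_of_mem (Multiset.mem_cons_self _ _)
            exact ((conn_mono hle h1).symm.trans hxy').trans (conn_mono hle h2).symm
          · have hle := Multiset.le_cons_self (B.erase (s(p,q))) (s(x,y))
            have hxy' : conn (s(x,y) ::ₘ (B.erase (s(p,q)))) x y :=
              conn_of_mem (Multiset.mem_cons_self _ _)
            exact (conn_mono hle h2).trans (hxy'.symm.trans (conn_mono hle h1))
        have hle2 : s(x,y) ::ₘ (B.erase (s(p,q))) ≤ s(x,y) ::ₘ ((F i).erase (s(p,q))) :=
          Multiset.cons_le_cons _ (Multiset.erase_le_erase _ hBF)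
        have hc2 := conn_mono hle2 hBe
        have e1 : nc (s(p,q) ::ₘ (s(x,y) ::ₘ (F i).erase (s(p,q)))) =
            nc (s(x,y) ::ₘ (F i).erase (s(p,q))) := nc_cons_eq hc2
        rw [Multiset.cons_swap, Multiset.cons_erase hfF] at e1
        exact e1.symm.trans (nc_cons_eq hconn)
    have hfcons : f ∈ s(x,y) ::ₘ F i := Multiset.mem_cons_of_mem hfF
    have hMv : Move k E F (Function.update F i ((s(x,y) ::ₘ F i).erase f)) :=
      ⟨i, s(x,y), f, hxy, hfcons, hnc, rfl⟩
    refine ⟨N + 1, _, ReachN.succ hR hMv, ?_⟩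
    -- f is leftover in the new tuple
    have hgs : s(x,y) ::ₘ ∑ i, F i ≤ E := cons_le_of_mem_sub hAF hxy
    have hsum := sum_update_add k F i ((s(x,y) ::ₘ F i).erase f)
    have hcnt := congrArg (Multiset.count f) hsum
    rw [Multiset.count_add, Multiset.count_add, Multiset.count_erase_self,
      Multiset.count_cons] at hcnt
    have hcE : Multiset.count f (s(x,y) ::ₘ ∑ i, F i) ≤ Multiset.count f E :=
      Multiset.count_le_of_le f hgs
    rw [Multiset.count_cons] at hcE
    have hFjle : Multiset.count f (F i) ≤ Multiset.count f (∑ i, F i) :=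
      Multiset.count_le_of_le f (single_le_sum' k F i)
    have hcpos : 1 ≤ Multiset.count f (F i) := Multiset.one_le_count_iff_mem.2 hfF
    rw [← Multiset.count_pos, Multiset.count_sub]
    by_cases hfg : f = s(x,y)
    · simp only [if_pos hfg] at hcnt hcE
      omega
    · simp only [if_neg hfg] at hcnt hcE
      omega
  -- every vertex of B is in U
  have hBU : ∀ f ∈ B, inU k E F0 x0 f := by
    intro f hfB
    obtain ⟨p, q, hpq⟩ : ∃ p q, f = s(p,q) := by
      obtain ⟨⟨p,q⟩, rfl⟩ := Quot.exists_rep f; exact ⟨p, q, rfl⟩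
    subst hpq
    have hxp : conn B x p ∧ conn B x q := by
      have hcons : conn (s(p,q) ::ₘ (B.erase (s(p,q)))) x y := by
        rwa [Multiset.cons_erase hfB]
      have hpq' : conn B p q := conn_of_mem hfB
      have hle : B.erase (s(p,q)) ≤ B := Multiset.erase_le _ _
      rcases conn_cons_iff.1 hcons with h | ⟨h1, h2⟩ | ⟨h1, h2⟩
      · exact absurd h (hBmin _ hfB)
      · have h1' := conn_mono hle h1
        exact ⟨h1', h1'.trans hpq'⟩
      · have h1' := conn_mono hle h1
        exact ⟨h1'.trans hpq'.symm, h1'⟩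
    rw [inU_def]
    intro v hv
    rcases Sym2.mem_iff.1 hv with rfl | rfl
    · exact U_closed_conn k E F0 x0 hBD hxU hxp.1
    · exact U_closed_conn k E F0 x0 hBD hxU hxp.2
  have hBfil : B ≤ fil (inU k E F0 x0) (F i) := le_fil.2 ⟨hBF, hBU⟩
  exact hchain i x y (conn_mono hBfil hBconn)

lemma chain_all (hA : Adm k E F0) (hpsi : psi F0 = mu k E) :
    ∀ (N : ℕ) (F : Fin k → Multiset (Sym2 V)), ReachN k E F0 N F →
      ∀ (i : Fin k) (x y : V), connU k E F0 x0 (F i) x y → connU k E F0 x0 (F0 i) x y := by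
  intro N
  induction N with
  | zero =>
    intro F hR
    cases hR
    exact fun i x y h => h
  | succ N ih =>
    intro F' hR'
    cases hR' with
    | succ hR hMv =>
      rename_i F
      obtain ⟨j, g, f, hg, hf, hnc, rfl⟩ := hMv
      intro i x y hxy
      by_cases hij : i = j
      · subst hij
        rw [Function.update_self] at hxy
        have hle : ((g ::ₘ F i).erase f) ≤ g ::ₘ F i := Multiset.erase_le _ _
        have hxy2 : conn (fil (inU k E F0 x0) (g ::ₘ F i)) x y :=
          conn_mono (fil_mono _ hle) hxy
        by_cases hgU : inU k E F0 x0 g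
        · rw [fil_cons_pos _ hgU] at hxy2
          obtain ⟨a, b, hab⟩ : ∃ a b, g = s(a,b) := by
            obtain ⟨⟨a,b⟩, rfl⟩ := Quot.exists_rep g; exact ⟨a, b, rfl⟩
          subst hab
          have haU : a ∈ USet k E F0 x0 := (inU_def k E F0 x0).1 hgU a (Sym2.mem_iff.2 (Or.inl rfl))
          have hmid : connU k E F0 x0 (F0 i) a b :=
            edge_step k E F0 x0 hA hpsi hR (ih F hR) hg haU i
          rcases conn_cons_iff.1 hxy2 with h | ⟨h1, h2⟩ | ⟨h1, h2⟩
          · exact ih F hR i x y h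
          · exact ((ih F hR i x a h1).trans hmid).trans (ih F hR i b y h2)
          · exact ((ih F hR i x b h1).trans hmid.symm).trans (ih F hR i a y h2)
        · rw [fil_cons_neg _ hgU] at hxy2
          exact ih F hR i x y hxy2
      · rw [Function.update_of_ne hij] at hxy
        exact ih F hR i x y hxy

lemma D_edge_conn (hA : Adm k E F0) (hpsi : psi F0 = mu k E) {p q : V}
    (hD : s(p,q) ∈ DSet k E F0) (hpU : p ∈ USet k E F0 x0) (i : Fin k) :
    connU k E F0 x0 (F0 i) p q := by
  obtain ⟨N, F, hR, hpq⟩ := hD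
  exact edge_step k E F0 x0 hA hpsi hR (chain_all k E F0 x0 hA hpsi N F hR) hpq hpU i

/-- the set `USet` is connected inside itself in every part of `F0` -/
lemma U_conn (hA : Adm k E F0) (hpsi : psi F0 = mu k E) {u v : V}
    (hu : u ∈ USet k E F0 x0) (hv : v ∈ USet k E F0 x0) (i : Fin k) :
    connU k E F0 x0 (F0 i) u v := by
  have key : ∀ a b : V, Relation.EqvGen (fun a b => s(a, b) ∈ DSet k E F0) a b →
      ((a ∈ USet k E F0 x0 ↔ b ∈ USet k E F0 x0) ∧
        (a ∈ USet k E F0 x0 → ∀ i, connU k E F0 x0 (F0 i) a b)) := by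
    intro a b hab
    induction hab with
    | rel a b h =>
      refine ⟨⟨fun ha => mem_U_of_rel k E F0 x0 ha h,
        fun hb => mem_U_of_rel k E F0 x0 hb (by rwa [Sym2.eq_swap])⟩, ?_⟩
      intro ha i
      exact D_edge_conn k E F0 x0 hA hpsi h ha i
    | refl a => exact ⟨Iff.rfl, fun _ _ => rfl⟩
    | symm a b _ ih =>
      exact ⟨ih.1.symm, fun hb i => (ih.2 (ih.1.2 hb) i).symm⟩
    | trans a b c _ _ ih1 ih2 =>
      exact ⟨ih1.1.trans ih2.1, fun ha i => (ih1.2 ha i).trans (ih2.2 (ih1.1.1 ha) i)⟩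
  have h1 := key x0 u hu
  have h2 := key x0 v hv
  exact (h1.2 (x0_mem_U k E F0 x0) i).symm.trans (h2.2 (x0_mem_U k E F0 x0) i)

end Exchange

lemma card_sum_eq {ι : Type*} (s : Finset ι) (f : ι → Multiset (Sym2 V)) :
    Multiset.card (∑ i ∈ s, f i) = ∑ i ∈ s, Multiset.card (f i) := by
  classical
  induction s using Finset.induction with
  | empty => simp
  | insert _ _ h ih => rw [Finset.sum_insert h, Finset.sum_insert h, Multiset.card_add, ih]

lemma update_sum_add {k : ℕ} (w : Multiset (Sym2 V) → ℕ) (F : Fin k → Multiset (Sym2 V))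
    (j : Fin k) (M : Multiset (Sym2 V)) :
    (∑ i, w (Function.update F j M i)) + w (F j) = w M + ∑ i, w (F i) := by
  have h1 : ∑ i, w (Function.update F j M i) =
      w M + ∑ i ∈ Finset.univ \ {j}, w (F i) := by
    rw [← Finset.sum_update_of_mem (Finset.mem_univ j) (fun i => w (F i)) (w M)]
    apply Finset.sum_congr rfl
    intro i _
    by_cases hij : i = j
    · subst hij; simp
    · simp [Function.update_of_ne hij]
  rw [h1, Finset.sum_eq_add_sum_sdiff_singleton_of_mem (Finset.mem_univ j) (fun i => w (F i))]
  omega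

section Partition

open scoped Classical

variable {k : ℕ} (F0 : Fin k → Multiset (Sym2 V))

/-- two vertices are equivalent if some set containing both is internally connected
in every part of the tuple -/
def approx (u v : V) : Prop :=
  ∃ W : Set V, u ∈ W ∧ v ∈ W ∧ ∀ w z : V, w ∈ W → z ∈ W → ∀ i,
    conn (fil (inSet W) (F0 i)) w z

lemma approx_refl (u : V) : approx F0 u u := by
  refine ⟨{u}, rfl, rfl, ?_⟩
  intro w z hw hz i
  rw [Set.mem_singleton_iff] at hw hz
  subst hw; subst hz
  rfl

lemma approx_symm {u v : V} (h : approx F0 u v) : approx F0 v u := by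
  obtain ⟨W, h1, h2, h3⟩ := h
  exact ⟨W, h2, h1, h3⟩

lemma approx_trans {u v w : V} (h : approx F0 u v) (h' : approx F0 v w) :
    approx F0 u w := by
  obtain ⟨W1, hu1, hv1, hc1⟩ := h
  obtain ⟨W2, hv2, hw2, hc2⟩ := h'
  refine ⟨W1 ∪ W2, Or.inl hu1, Or.inr hw2, ?_⟩
  intro a b ha hb i
  have m1 : ∀ {a b : V}, a ∈ W1 → b ∈ W1 →
      conn (fil (inSet (W1 ∪ W2)) (F0 i)) a b := by
    intro a b ha hb
    refine conn_mono (fil_le_fil_of_imp ?_) (hc1 a b ha hb i)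
    intro e _ he x hx
    exact Or.inl (he x hx)
  have m2 : ∀ {a b : V}, a ∈ W2 → b ∈ W2 →
      conn (fil (inSet (W1 ∪ W2)) (F0 i)) a b := by
    intro a b ha hb
    refine conn_mono (fil_le_fil_of_imp ?_) (hc2 a b ha hb i)
    intro e _ he x hx
    exact Or.inr (he x hx)
  rcases ha with ha | ha <;> rcases hb with hb | hb
  · exact m1 ha hb
  · exact (m1 ha hv1).trans (m2 hv2 hb)
  · exact (m2 ha hv2).trans (m1 hv1 hb)
  · exact m2 ha hb

lemma approx_to_conn {u v : V} (h : approx F0 u v) (i : Fin k) : conn (F0 i) u v := by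
  obtain ⟨W, hu, hv, hc⟩ := h
  exact conn_mono (fil_le _ _) (hc u v hu hv i)

/-- an edge is non-crossing for the partition -/
def nxp (e : Sym2 V) : Prop := ∀ p q : V, e = s(p,q) → approx F0 p q

end Partition

/-- The Nash-Williams/Tutte spanning tree packing theorem (multigraph version). -/
theorem packing [Nonempty V] {k : ℕ} {E : Multiset (Sym2 V)}
    (hC : ∀ X ≤ E, k * (nc (E - X) - 1) ≤ Multiset.card X) :
    ∃ Ts : Fin k → Multiset (Sym2 V), (∑ i, Ts i) ≤ E ∧
      ∀ i, nc (Ts i) = 1 ∧ Multiset.card (Ts i) + 1 = Fintype.card V := by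
  classical
  -- choose a psi-minimal, then card-minimal tuple
  set cset := {c | ∃ F : Fin k → Multiset (Sym2 V),
    Adm k E F ∧ psi F = mu k E ∧ (∑ i, Multiset.card (F i)) = c} with hcset
  have hcne : cset.Nonempty := by
    obtain ⟨F1, hF1a, hF1m⟩ := mu_spec k E
    exact ⟨_, F1, hF1a, hF1m, rfl⟩
  obtain ⟨F0, hAdm, hpsi0, hcs⟩ := Nat.sInf_mem hcne
  -- each part is a spanning forest (no redundant edges)
  have hforest : ∀ j, Multiset.card (F0 j) + nc (F0 j) = Fintype.card V := by
    intro j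
    have hge := cardV_le_card_add_nc (F0 j)
    by_contra hne
    obtain ⟨T, hTle, hTnc, hTcard⟩ := exists_forest (F0 j)
    have hsum : (∑ i, Function.update F0 j T i) + F0 j = T + ∑ i, F0 i :=
      sum_update_add k F0 j T
    have hadm' : Adm k E (Function.update F0 j T) := by
      unfold Adm
      have h1 : T + ∑ i, F0 i ≤ F0 j + ∑ i, F0 i := add_le_add_left hTle _
      have h2 : (∑ i, Function.update F0 j T i) + F0 j ≤ (∑ i, F0 i) + F0 j := by
        rw [hsum, add_comm (∑ i, F0 i) (F0 j)]
        exact h1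
      exact le_trans (le_of_add_le_add_right h2) hAdm
    have hpsi' : psi (Function.update F0 j T) = mu k E := by
      have h3 := psi_update_add k F0 j T
      omega
    have hcard' : (∑ i, Multiset.card (Function.update F0 j T i)) + Multiset.card (F0 j)
        = Multiset.card T + ∑ i, Multiset.card (F0 i) :=
      update_sum_add (fun s => Multiset.card s) F0 j T
    have hmin : sInf cset ≤ ∑ i, Multiset.card (Function.update F0 j T i) :=
      Nat.sInf_le ⟨Function.update F0 j T, hadm', hpsi', rfl⟩
    omega
  -- main claim: every part is connected
  have hall : ∀ i, nc (F0 i) = 1 := by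
    by_contra hno
    push_neg at hno
    obtain ⟨j0, hj0⟩ := hno
    have hone : 1 ≤ nc (F0 j0) := nc_pos _
    have hj2 : 2 ≤ nc (F0 j0) := by omega
    -- exchange lemma conclusion: leftover edges are non-crossing
    have hleft : ∀ g ∈ E - ∑ i, F0 i, nxp F0 g := by
      intro g hgL p q hgpq
      subst hgpq
      have hD0 : s(p,q) ∈ DSet k E F0 := ⟨0, F0, ReachN.zero, hgL⟩
      have hpU : p ∈ USet k E F0 p := x0_mem_U k E F0 p
      have hqU : q ∈ USet k E F0 p := mem_U_of_rel k E F0 p hpU hD0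
      refine ⟨USet k E F0 p, hpU, hqU, ?_⟩
      intro a b ha hb i
      exact U_conn k E F0 p hAdm hpsi0 ha hb i
    set P := Nat.card (Quot (approx F0)) with hPdef
    have hble : ∀ i, nc (F0 i) ≤ P := fun i =>
      card_quot_le (fun a b hab => approx_to_conn F0 hab i)
    have hP2 : 2 ≤ P := le_trans hj2 (hble j0)
    -- per-part crossing bound
    have hcrs : ∀ i, Multiset.card (fil (fun e => ¬ nxp F0 e) (F0 i)) + nc (F0 i) ≤ P := by
      intro i
      have hnx : nc (fil (nxp F0) (F0 i)) ≤ P := by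
        apply card_quot_le
        intro a b hab
        obtain ⟨W, haW, hbW, hcW⟩ := hab
        have h1 := hcW a b haW hbW i
        refine conn_mono (fil_le_fil_of_imp ?_) h1
        intro e heF he p q hepq
        subst hepq
        exact ⟨W, he p (Sym2.mem_iff.2 (Or.inl rfl)), he q (Sym2.mem_iff.2 (Or.inr rfl)), hcW⟩
      have h2 := cardV_le_card_add_nc (fil (nxp F0) (F0 i))
      have h3 : Multiset.card (fil (nxp F0) (F0 i)) +
          Multiset.card (fil (fun e => ¬ nxp F0 e) (F0 i)) = Multiset.card (F0 i) := by
        rw [← Multiset.card_add, fil_add_not]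
      have h4 := hforest i
      omega
    -- sum over parts
    have hsum_crs : (∑ i, Multiset.card (fil (fun e => ¬ nxp F0 e) (F0 i))) + psi F0
        ≤ k * P := by
      have h1 := Finset.sum_le_sum (fun i (_ : i ∈ Finset.univ) => hcrs i)
      rw [Finset.sum_add_distrib] at h1
      have h2 : (∑ _i : Fin k, P) = k * P := by
        simp [Finset.sum_const, Finset.card_univ, mul_comm]
      rw [h2] at h1
      exact h1
    have hpsik : k + 1 ≤ psi F0 := by
      have h1 : ∑ i ∈ Finset.univ \ {j0}, 1 ≤ ∑ i ∈ Finset.univ \ {j0}, nc (F0 i) :=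
        Finset.sum_le_sum (fun i _ => nc_pos (F0 i))
      rw [Finset.sum_const, smul_eq_mul, mul_one] at h1
      have h2 : psi F0 = nc (F0 j0) + ∑ i ∈ Finset.univ \ {j0}, nc (F0 i) :=
        Finset.sum_eq_add_sum_sdiff_singleton_of_mem (Finset.mem_univ j0) _
      have h3 : (Finset.univ \ {j0} : Finset (Fin k)).card = k - 1 := by
        rw [Finset.card_sdiff_of_subset (Finset.singleton_subset_iff.2 (Finset.mem_univ j0))]
        simp
      have hk1 : 1 ≤ k := by have := j0.isLt; omega
      omega
    -- total crossing edges
    have hXsum : Multiset.card (fil (fun e => ¬ nxp F0 e) E) =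
        ∑ i, Multiset.card (fil (fun e => ¬ nxp F0 e) (F0 i)) := by
      have hE : (∑ i, F0 i) + (E - ∑ i, F0 i) = E := by
        rw [add_comm]
        exact tsub_add_cancel_of_le hAdm
      conv_lhs => rw [← hE]
      rw [fil_add]
      have hL : fil (fun e => ¬ nxp F0 e) (E - ∑ i, F0 i) = 0 := by
        rw [fil_eq_nil]
        intro g hg hn
        exact hn (hleft g hg)
      rw [hL, add_zero, fil_sum_eq, card_sum_eq]
    -- apply the cut condition
    have hXle : fil (fun e => ¬ nxp F0 e) E ≤ E := fil_le _ _
    have hCX := hC _ hXle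
    have hEsub : E - fil (fun e => ¬ nxp F0 e) E = fil (nxp F0) E := by
      have hsplit := fil_add_not (nxp F0) E
      calc E - fil (fun e => ¬ nxp F0 e) E
          = (fil (nxp F0) E + fil (fun e => ¬ nxp F0 e) E) - fil (fun e => ¬ nxp F0 e) E := by
            rw [hsplit]
        _ = fil (nxp F0) E := by simp
    have hPle : P ≤ nc (fil (nxp F0) E) := by
      apply card_quot_le
      intro a b hab
      refine Quot.sound ?_
      have h2 := Multiset.of_mem_filter (hab : s(a,b) ∈ E.filter (nxp F0))
      exact h2 a b rfl
    rw [hEsub] at hCX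
    have hmul : k * (P - 1) ≤ k * (nc (fil (nxp F0) E) - 1) :=
      Nat.mul_le_mul_left k (by omega)
    have hmul2 : k * (P - 1) + k = k * P := by
      have h5 : P - 1 + 1 = P := by omega
      calc k * (P - 1) + k = k * ((P - 1) + 1) := by ring
      _ = k * P := by rw [h5]
    omega
  -- extract spanning trees
  choose T hT1 hT2 hT3 using fun i => exists_forest (F0 i)
  refine ⟨T, ?_, ?_⟩
  · exact le_trans (Finset.sum_le_sum (fun i _ => hT1 i)) hAdm
  · intro i
    have h1 : nc (T i) = 1 := by rw [hT2 i, hall i]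
    refine ⟨h1, ?_⟩
    have := hT3 i
    omega

end NWAux

namespace NWAux

variable {V : Type*} [Fintype V] [DecidableEq V]

lemma numComponents_eq (E : Multiset (Sym2 V)) : numComponents E = nc E := rfl

/-- easy direction: spanning trees in each edge-deleted graph force strict cut bounds -/
lemma cut_lower {k : ℕ} {E : Multiset (Sym2 V)} (hconn : nc E = 1)
    (hT : ∀ e ∈ E, HasEdgeDisjointSpanningTrees (E.erase e) k)
    {X : Multiset (Sym2 V)} (hXE : X ≤ E) (hX2 : 2 ≤ nc (E - X)) :
    k * (nc (E - X) - 1) + 1 ≤ Multiset.card X := by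
  classical
  set nn : Sym2 V → Prop := fun e => ∀ p q : V, e = s(p,q) → conn (E - X) p q with hnn
  set X' : Multiset (Sym2 V) := fil (fun e => ¬ nn e) E with hX'
  -- every edge of E - X is non-crossing
  have hmemnn : ∀ e ∈ E - X, nn e := by
    intro e he p q hepq
    subst hepq
    exact conn_of_mem he
  -- X' ≤ X
  have hX'X : X' ≤ X := by
    rw [Multiset.le_iff_count]
    intro a
    rw [hX', count_fil]
    split
    · rename_i ha
      have h0 : Multiset.count a (E - X) = 0 := by
        by_contra h
        exact ha (hmemnn a (Multiset.count_pos.1 (Nat.pos_of_ne_zero h)))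
      rw [Multiset.count_sub] at h0
      have := Multiset.count_le_of_le a hXE
      omega
    · omega
  -- X' is nonempty
  have hX'ne : X' ≠ 0 := by
    intro h0
    have hall : ∀ e ∈ E, nn e := by
      intro e he
      by_contra hn
      have : e ∈ X' := mem_fil.2 ⟨he, hn⟩
      rw [h0] at this
      exact absurd this (Multiset.notMem_zero e)
    have : nc (E - X) ≤ nc E := by
      apply card_quot_le
      intro a b hab
      exact hall _ hab a b rfl
    omega
  obtain ⟨e0, he0⟩ := Multiset.exists_mem_of_ne_zero hX'ne
  have he0E : e0 ∈ E := Multiset.mem_of_le (fil_le _ _) he0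
  have he0n : ¬ nn e0 := (mem_fil.1 he0).2
  obtain ⟨Ts, hTs, hsp⟩ := hT e0 he0E
  -- per tree crossing bound
  have htree : ∀ i, nc (E - X) ≤ Multiset.card (fil (fun e => ¬ nn e) (Ts i)) + 1 := by
    intro i
    have hnc1 : nc (Ts i) = 1 := (hsp i).1
    have hgec : nc (E - X) ≤ nc (fil nn (Ts i)) := by
      apply card_quot_le
      intro a b hab
      exact (mem_fil.1 hab).2 a b rfl
    have hsplit := fil_add_not nn (Ts i)
    have heq : Ts i - fil (fun e => ¬ nn e) (Ts i) = fil nn (Ts i) := by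
      have haux : (fil nn (Ts i) + fil (fun e => ¬ nn e) (Ts i))
          - fil (fun e => ¬ nn e) (Ts i) = fil nn (Ts i) := by simp
      rwa [hsplit] at haux
    have hle : nc (fil nn (Ts i)) ≤ nc (Ts i) + Multiset.card (fil (fun e => ¬ nn e) (Ts i)) := by
      rw [← heq]
      exact nc_sub_le _ _
    omega
  -- sum the bounds
  have hsum : k * (nc (E - X) - 1) ≤ ∑ i, Multiset.card (fil (fun e => ¬ nn e) (Ts i)) := by
    have h1 : ∀ i : Fin k, nc (E - X) - 1 ≤ Multiset.card (fil (fun e => ¬ nn e) (Ts i)) := by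
      intro i; have := htree i; omega
    have h2 := Finset.sum_le_sum (fun i (_ : i ∈ Finset.univ) => h1 i)
    rw [Finset.sum_const, Finset.card_univ, Fintype.card_fin, smul_eq_mul] at h2
    exact h2
  -- crossing edges of the trees fit into X'.erase e0
  have h4 : Multiset.card (fil (fun e => ¬ nn e) (∑ i, Ts i)) =
      ∑ i, Multiset.card (fil (fun e => ¬ nn e) (Ts i)) := by
    rw [fil_sum_eq, card_sum_eq]
  have h5 : fil (fun e => ¬ nn e) (∑ i, Ts i) ≤ fil (fun e => ¬ nn e) (E.erase e0) :=
    fil_mono _ hTs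
  have h6 : fil (fun e => ¬ nn e) (E.erase e0) ≤ X'.erase e0 := by
    rw [Multiset.le_iff_count]
    intro a
    rw [count_fil]
    split
    · rename_i ha
      by_cases hae : a = e0
      · subst hae
        rw [Multiset.count_erase_self, Multiset.count_erase_self, hX', count_fil, if_pos ha]
      · rw [Multiset.count_erase_of_ne hae, Multiset.count_erase_of_ne hae, hX', count_fil,
          if_pos ha]
    · omega
  have h7 : Multiset.card (X'.erase e0) + 1 = Multiset.card X' := by
    have h71 := Multiset.card_erase_of_mem he0
    rw [Nat.pred_eq_sub_one] at h71
    have hpos : 0 < Multiset.card X' := Multiset.card_pos_iff_exists_mem.2 ⟨e0, he0⟩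
    omega
  have h8 : Multiset.card X' ≤ Multiset.card X := Multiset.card_le_card hX'X
  have h9 := Multiset.card_le_card h5
  have h10 := Multiset.card_le_card h6
  omega

end NWAux

open NWAux in
theorem stmt_5 {V : Type*} [Fintype V] [DecidableEq V] (E : Multiset (Sym2 V))
    (hloop : ∀ e ∈ E, ¬ e.IsDiag) (hV : 1 < Fintype.card V)
    (hconn : numComponents E = 1) (k : ℕ) (hk : 0 < k) :
    (∀ e ∈ E, HasEdgeDisjointSpanningTrees (E.erase e) k) ↔ (k : ℝ) < strength E := by
  classical
  have hne : Nonempty V := Fintype.card_pos_iff.1 (by omega)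
  set S := { r : ℝ | ∃ X ≤ E, 1 < numComponents (E - X) ∧
    r = (Multiset.card X : ℝ) / ((numComponents (E - X) : ℝ) - 1) } with hS
  have hSne : S.Nonempty := by
    refine ⟨(Multiset.card E : ℝ) / ((numComponents (E - E) : ℝ) - 1), E, le_refl E, ?_, rfl⟩
    show 1 < numComponents (E - E)
    rw [tsub_self, numComponents_eq, nc_zero]
    omega
  have hSbdd : BddBelow S := by
    refine ⟨0, fun r hr => ?_⟩
    obtain ⟨X, hXE, hX2, rfl⟩ := hr
    apply div_nonneg (Nat.cast_nonneg _)
    have : (2 : ℝ) ≤ (numComponents (E - X) : ℝ) := by exact_mod_cast hX2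
    linarith
  constructor
  · -- trees → strength bound
    intro hT
    have hkey : ∀ r ∈ S, (k : ℝ) + 1 / ((Fintype.card V : ℝ) - 1) ≤ r := by
      intro r hr
      obtain ⟨X, hXE, hX2, rfl⟩ := hr
      set c := numComponents (E - X) with hc
      have hc2 : 2 ≤ c := hX2
      have hcn : c ≤ Fintype.card V := by
        rw [hc, numComponents_eq]
        exact nc_le_cardV _
      have hcut := cut_lower (hconn := by rw [← numComponents_eq]; exact hconn) hT hXE
        (by rw [← numComponents_eq]; exact hX2)
      have hcR : (2:ℝ) ≤ (c:ℝ) := by exact_mod_cast hc2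
      have hpos : (0:ℝ) < (c:ℝ) - 1 := by linarith
      have hposn : (0:ℝ) < (Fintype.card V:ℝ) - 1 := by
        have : (2:ℝ) ≤ (Fintype.card V:ℝ) := by exact_mod_cast hV
        linarith
      have hcast : ((k * (c - 1) + 1 : ℕ) : ℝ) ≤ (Multiset.card X : ℝ) := by
        exact_mod_cast hcut
      have hsub : ((c - 1 : ℕ) : ℝ) = (c : ℝ) - 1 := by
        have : 1 ≤ c := by omega
        push_cast [this]
        ring
      rw [Nat.cast_add, Nat.cast_mul, hsub, Nat.cast_one] at hcast
      have h1 : (k : ℝ) + 1 / ((c:ℝ) - 1) ≤ (Multiset.card X : ℝ) / ((c : ℝ) - 1) := by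
        rw [le_div_iff₀ hpos]
        calc ((k : ℝ) + 1 / ((c:ℝ) - 1)) * ((c:ℝ) - 1)
            = (k:ℝ) * ((c:ℝ) - 1) + 1 := by field_simp
        _ ≤ _ := hcast
      have h2 : 1 / ((Fintype.card V:ℝ) - 1) ≤ 1 / ((c:ℝ) - 1) := by
        apply one_div_le_one_div_of_le hpos
        have : (c:ℝ) ≤ (Fintype.card V:ℝ) := by exact_mod_cast hcn
        linarith
      linarith
    have hles : (k : ℝ) + 1 / ((Fintype.card V : ℝ) - 1) ≤ sInf S := le_csInf hSne hkey
    have hposn : (0:ℝ) < 1 / ((Fintype.card V:ℝ) - 1) := by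
      have : (2:ℝ) ≤ (Fintype.card V:ℝ) := by exact_mod_cast hV
      exact one_div_pos.2 (by linarith)
    have hstrength : strength E = sInf S := rfl
    rw [hstrength]
    linarith
  · -- strength bound → trees
    intro hlt e he
    have hstrength : strength E = sInf S := rfl
    rw [hstrength] at hlt
    have hcut : ∀ X ≤ E, 1 < numComponents (E - X) →
        k * (numComponents (E - X) - 1) + 1 ≤ Multiset.card X := by
      intro X hXE hX2
      have hmem : (Multiset.card X : ℝ) / ((numComponents (E - X) : ℝ) - 1) ∈ S :=
        ⟨X, hXE, hX2, rfl⟩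
      have hr := csInf_le hSbdd hmem
      have hklt : (k : ℝ) < (Multiset.card X : ℝ) / ((numComponents (E - X) : ℝ) - 1) :=
        lt_of_lt_of_le hlt hr
      set c := numComponents (E - X) with hc
      have hc2 : 2 ≤ c := hX2
      have hcR : (2:ℝ) ≤ (c:ℝ) := by exact_mod_cast hc2
      have hpos : (0:ℝ) < (c:ℝ) - 1 := by linarith
      rw [lt_div_iff₀ hpos] at hklt
      have hsub : ((c - 1 : ℕ) : ℝ) = (c : ℝ) - 1 := by
        have : 1 ≤ c := by omega
        push_cast [this]
        ring
      have : ((k * (c - 1) : ℕ) : ℝ) < (Multiset.card X : ℝ) := by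
        rw [Nat.cast_mul, hsub]
        exact hklt
      have hfin : k * (c - 1) < Multiset.card X := Nat.cast_lt.1 this
      omega
    -- cut condition for E.erase e
    have hC : ∀ X ≤ E.erase e, k * (nc (E.erase e - X) - 1) ≤ Multiset.card X := by
      intro X hXE'
      by_cases h2 : 2 ≤ nc (E.erase e - X)
      · have hXE : e ::ₘ X ≤ E := by
          have := Multiset.cons_le_cons e hXE'
          rwa [Multiset.cons_erase he] at this
        have hsub : E - (e ::ₘ X) = E.erase e - X := Multiset.sub_cons e E X
        have := hcut (e ::ₘ X) hXE (by rw [hsub, numComponents_eq]; omega)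
        rw [hsub, numComponents_eq, Multiset.card_cons] at this
        omega
      · have : nc (E.erase e - X) - 1 = 0 := by omega
        rw [this, Nat.mul_zero]
        omega
    obtain ⟨Ts, hTs, hsp⟩ := packing (E := E.erase e) (k := k) hC
    exact ⟨Ts, hTs, fun i => ⟨by rw [numComponents_eq]; exact (hsp i).1, by
      have := (hsp i).2; omega⟩⟩
end

section
/- Let a, b, n be positive reals with a + b ≥ n - 3, a ≥ 4 and b ≥ 4, and suppose 6ab/n ≤ 2√5·√(ab·(1 - a/n)·(1 - b/n)). Then n ≤ 112. -/
theorem stmt_11 (a b n : ℝ) (ha0 : 0 < a) (hb0 : 0 < b) (hn0 : 0 < n)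
    (hab : n - 3 ≤ a + b) (ha : 4 ≤ a) (hb : 4 ≤ b)
    (h : 6 * a * b / n ≤ 2 * Real.sqrt 5 * Real.sqrt (a * b * (1 - a / n) * (1 - b / n))) :
    n ≤ 112 := by
  set X := a * b * (1 - a / n) * (1 - b / n) with hXdef
  have hlhs : 0 < 6 * a * b / n := by positivity
  have hX : 0 ≤ X := by
    by_contra hneg
    push_neg at hneg
    rw [Real.sqrt_eq_zero_of_nonpos hneg.le] at h
    nlinarith [hlhs]
  have h5 : Real.sqrt 5 ^ 2 = 5 := Real.sq_sqrt (by norm_num)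
  have hXs : Real.sqrt X ^ 2 = X := Real.sq_sqrt hX
  have h2 : (6 * a * b / n) ^ 2 ≤ (2 * Real.sqrt 5 * Real.sqrt X) ^ 2 :=
    pow_le_pow_left₀ hlhs.le h 2
  have h3 : (6 * a * b / n) ^ 2 ≤ 20 * X := by nlinarith
  have hne : n ≠ 0 := hn0.ne'
  have key : 9 * (a * b) ≤ 5 * ((n - a) * (n - b)) := by
    rw [hXdef] at h3
    have h4 : 36 * (a * b) ^ 2 ≤ 20 * (a * b * ((n - a) * (n - b))) := by
      have e1 : (6 * a * b / n) ^ 2 = 36 * (a * b) ^ 2 / n ^ 2 := by ring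
      have e2 : 20 * (a * b * (1 - a / n) * (1 - b / n))
          = 20 * (a * b * ((n - a) * (n - b))) / n ^ 2 := by field_simp
      rw [e1, e2, div_le_div_iff₀ (by positivity) (by positivity)] at h3
      exact le_of_mul_le_mul_right h3 (by positivity)
    have hab0 : 0 < a * b := by positivity
    nlinarith
  nlinarith [mul_nonneg (sub_nonneg.2 ha) (sub_nonneg.2 hb)]
end

section
/- If G is a k-regular graph with n vertices and diameter m, then n ≤ 1 + k·∑_{i=0}^{m-1} (k-1)^i. -/
open Finset SimpleGraph

private lemma back_neighbor {V : Type*} (G : SimpleGraph V) {v0 u : V} {i : ℕ}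
    (hr : G.Reachable v0 u) (h : G.dist v0 u = i + 1) :
    ∃ w, G.Adj w u ∧ G.dist v0 w = i := by
  obtain ⟨p, hp⟩ := hr.exists_walk_length_eq_dist
  have hq : p.reverse.length = i + 1 := by rw [SimpleGraph.Walk.length_reverse, hp, h]
  cases hq' : p.reverse with
  | nil => rw [hq'] at hq; simp at hq
  | cons hadj q' =>
    rename_i w
    rw [hq'] at hq
    simp only [SimpleGraph.Walk.length_cons] at hq
    refine ⟨w, hadj.symm, ?_⟩
    have h1 : G.dist v0 w ≤ i := by
      have h1' := SimpleGraph.dist_le q'.reverse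
      rw [SimpleGraph.Walk.length_reverse] at h1'
      omega
    obtain ⟨r, hr'⟩ := SimpleGraph.Reachable.exists_walk_length_eq_dist ⟨q'.reverse⟩
    have h2 : G.dist v0 u ≤ G.dist v0 w + 1 := by
      have := SimpleGraph.dist_le (r.concat hadj.symm)
      rwa [SimpleGraph.Walk.length_concat, hr'] at this
    omega

theorem stmt_13 {V : Type*} [Fintype V] (G : SimpleGraph V) [DecidableRel G.Adj]
    (k m : ℕ) (hreg : G.IsRegularOfDegree k) (hconn : G.Connected)
    (hdiam : ∀ u v : V, G.dist u v ≤ m) :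
    Fintype.card V ≤ 1 + k * ∑ i ∈ Finset.range m, (k - 1) ^ i := by
  classical
  obtain ⟨v0⟩ := hconn.nonempty
  set S : ℕ → Finset V := fun i => Finset.univ.filter (fun u => G.dist v0 u = i) with hS
  -- every vertex lies in some S i, i ≤ m
  have hcover : Fintype.card V ≤ ∑ i ∈ Finset.range (m + 1), (S i).card := by
    calc Fintype.card V = (Finset.univ : Finset V).card := rfl
      _ ≤ ((Finset.range (m + 1)).biUnion S).card := by
          apply Finset.card_le_card
          intro u _
          simp only [Finset.mem_biUnion, hS, Finset.mem_filter, Finset.mem_univ, true_and,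
            Finset.mem_range]
          exact ⟨G.dist v0 u, Nat.lt_succ_of_le (hdiam v0 u), rfl⟩
      _ ≤ ∑ i ∈ Finset.range (m + 1), (S i).card := Finset.card_biUnion_le
  have hS0 : (S 0).card = 1 := by
    have : S 0 = {v0} := by
      ext u
      simp only [hS, Finset.mem_filter, Finset.mem_univ, true_and, Finset.mem_singleton]
      rw [(hconn v0 u).dist_eq_zero_iff]
      exact comm
    rw [this, Finset.card_singleton]
  have hS1 : (S 1).card ≤ k := by
    have : S 1 ⊆ G.neighborFinset v0 := by
      intro u hu
      simp only [hS, Finset.mem_filter, Finset.mem_univ, true_and] at hu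
      rw [SimpleGraph.mem_neighborFinset]
      exact (SimpleGraph.dist_eq_one_iff_adj.mp hu)
    calc (S 1).card ≤ (G.neighborFinset v0).card := Finset.card_le_card this
      _ = k := hreg v0
  -- key step: for i ≥ 1, |S (i+1)| ≤ (k-1) * |S i|
  have hstep : ∀ i : ℕ, 1 ≤ i → (S (i + 1)).card ≤ (k - 1) * (S i).card := by
    intro i hi
    have hex : ∀ u : V, ∃ w, G.dist v0 u = i + 1 → (G.Adj w u ∧ G.dist v0 w = i) := by
      intro u
      by_cases hu : G.dist v0 u = i + 1
      · obtain ⟨w, hw⟩ := back_neighbor G (hconn v0 u) hu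
        exact ⟨w, fun _ => hw⟩
      · exact ⟨v0, fun h => absurd h hu⟩
    choose p hp using hex
    have hsub : S (i + 1) ⊆ (S i).biUnion
        (fun w => (G.neighborFinset w).filter (fun u => G.dist v0 u = i + 1 ∧ p u = w)) := by
      intro u hu
      simp only [hS, Finset.mem_filter, Finset.mem_univ, true_and] at hu
      obtain ⟨hadj, hdist⟩ := hp u hu
      simp only [Finset.mem_biUnion, hS, Finset.mem_filter, Finset.mem_univ, true_and,
        SimpleGraph.mem_neighborFinset]
      exact ⟨p u, hdist, hadj, hu, rfl⟩
    have hfiber : ∀ w ∈ S i,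
        ((G.neighborFinset w).filter (fun u => G.dist v0 u = i + 1 ∧ p u = w)).card ≤ k - 1 := by
      intro w hw
      simp only [hS, Finset.mem_filter, Finset.mem_univ, true_and] at hw
      obtain ⟨j, hj⟩ : ∃ j, i = j + 1 := ⟨i - 1, by omega⟩
      obtain ⟨b, hb_adj, hb_dist⟩ := back_neighbor G (hconn v0 w) (by rw [hw, hj])
      have hb_mem : b ∈ G.neighborFinset w := by
        rw [SimpleGraph.mem_neighborFinset]; exact hb_adj.symm
      have hsub2 : (G.neighborFinset w).filter (fun u => G.dist v0 u = i + 1 ∧ p u = w)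
          ⊆ (G.neighborFinset w).erase b := by
        intro u hu
        simp only [Finset.mem_filter] at hu
        rw [Finset.mem_erase]
        refine ⟨?_, hu.1⟩
        intro hub
        rw [hub] at hu
        omega
      calc _ ≤ ((G.neighborFinset w).erase b).card := Finset.card_le_card hsub2
        _ = (G.neighborFinset w).card - 1 := Finset.card_erase_of_mem hb_mem
        _ = k - 1 := by rw [G.card_neighborFinset_eq_degree, hreg w]
    calc (S (i + 1)).card ≤ _ := Finset.card_le_card hsub
      _ ≤ ∑ w ∈ S i, ((G.neighborFinset w).filter
            (fun u => G.dist v0 u = i + 1 ∧ p u = w)).card := Finset.card_biUnion_le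
      _ ≤ ∑ _w ∈ S i, (k - 1) := Finset.sum_le_sum hfiber
      _ = (S i).card * (k - 1) := by rw [Finset.sum_const, smul_eq_mul]
      _ = (k - 1) * (S i).card := Nat.mul_comm _ _
  -- bound |S (i+1)| ≤ k * (k-1)^i by induction
  have hbound : ∀ i : ℕ, (S (i + 1)).card ≤ k * (k - 1) ^ i := by
    intro i
    induction i with
    | zero => simpa using hS1
    | succ j ih =>
      calc (S (j + 2)).card ≤ (k - 1) * (S (j + 1)).card := hstep (j + 1) (by omega)
        _ ≤ (k - 1) * (k * (k - 1) ^ j) := Nat.mul_le_mul_left _ ih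
        _ = k * (k - 1) ^ (j + 1) := by ring
  calc Fintype.card V ≤ ∑ i ∈ Finset.range (m + 1), (S i).card := hcover
    _ = (∑ i ∈ Finset.range m, (S (i + 1)).card) + (S 0).card := Finset.sum_range_succ' _ m
    _ ≤ (∑ i ∈ Finset.range m, k * (k - 1) ^ i) + 1 := by
        gcongr with i _
        · exact hbound i
        · exact hS0.le
    _ = 1 + k * ∑ i ∈ Finset.range m, (k - 1) ^ i := by
        rw [Finset.mul_sum]; ring
end
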